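/- Let B = {b_1,...,b_n} be a strongly reduced basis of a lattice Λ. If S_i ⊆ {1,...,i−1} is the set of indices j with ‖b_j‖ = λ_j and T_i its complement in {1,...,i−1}, then ‖b_i‖² ≤ ‖b_i*‖² + (1/4)Σ_{j∈S_i}‖b_j*‖² + (1/16)Σ_{j∈T_i}λ_j². -/

import Mathlib

open Finset
open scoped RealInnerProductSpace

noncomputable def latticeOf {n : ℕ} (b : Fin n → EuclideanSpace ℝ (Fin n)) :
    AddSubgroup (EuclideanSpace ℝ (Fin n)) := AddSubgroup.closure (Set.range b)

/-- The `i`-th successive minimum of a lattice `L` (with `i ≥ 1`): the least `r ≥ 0`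
such that the closed ball of radius `r` contains `i` linearly independent lattice vectors. -/
noncomputable def succMin {n : ℕ} (L : AddSubgroup (EuclideanSpace ℝ (Fin n))) (i : ℕ) : ℝ :=
  sInf {r : ℝ | 0 ≤ r ∧ ∃ v : Fin i → EuclideanSpace ℝ (Fin n),
    (∀ j, v j ∈ L) ∧ LinearIndependent ℝ v ∧ ∀ j, ‖v j‖ ≤ r}

/-- A basis `b` of the full-rank lattice it generates is *strongly reduced* if
(1) there are linearly independent lattice vectors `v i` realizing the successive minima whose
integer coordinates over `b` have nonzero `i`-th coordinate and vanish beyond `i`, and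
(2) each `b i` is shortest in its coset modulo the preceding basis vectors. -/
def StronglyReduced {n : ℕ} (b : Fin n → EuclideanSpace ℝ (Fin n)) : Prop :=
  (∃ v : Fin n → EuclideanSpace ℝ (Fin n), ∃ x : Fin n → Fin n → ℤ,
    LinearIndependent ℝ v ∧ (∀ i, v i ∈ latticeOf b) ∧
    (∀ i : Fin n, ‖v i‖ = succMin (latticeOf b) ((i : ℕ) + 1)) ∧
    (∀ i, v i = ∑ j, x i j • b j) ∧
    (∀ i, x i i ≠ 0) ∧ (∀ i j, i < j → x i j = 0)) ∧
  (∀ i : Fin n, ∀ c : Fin n → ℤ,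
    ‖b i‖ ≤ ‖b i + ∑ j ∈ Finset.univ.filter (· < i), c j • b j‖)

/-- The Gram–Schmidt orthogonalization of a family indexed by `Fin n`. -/
noncomputable def gs {n : ℕ} (b : Fin n → EuclideanSpace ℝ (Fin n)) :
    Fin n → EuclideanSpace ℝ (Fin n) :=
  @InnerProductSpace.gramSchmidt ℝ (EuclideanSpace ℝ (Fin n)) _ _ _ (Fin n) _ _
    (inferInstance : WellFoundedLT (Fin n)) b

section Aux
variable {n : ℕ} (b : Fin n → EuclideanSpace ℝ (Fin n))

noncomputable abbrev wfFin (n : ℕ) : WellFoundedLT (Fin n) := inferInstance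

/-- coefficient of `w` along `gs b j` -/
noncomputable def coefv (w : EuclideanSpace ℝ (Fin n)) (j : Fin n) : ℝ :=
  ⟪gs b j, w⟫ / ‖gs b j‖ ^ 2

lemma inner_gs_b_lt {j k : Fin n} (h : j < k) : ⟪gs b k, b j⟫ = 0 :=
  @InnerProductSpace.gramSchmidt_inv_triangular ℝ _ _ _ _ (Fin n) _ _ (wfFin n) b j k h

lemma gs_orthogonal {j k : Fin n} (h : j ≠ k) : ⟪gs b j, gs b k⟫ = 0 :=
  @InnerProductSpace.gramSchmidt_orthogonal ℝ _ _ _ _ (Fin n) _ _ (wfFin n) b j k h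

lemma gs_ne_zero (hli : LinearIndependent ℝ b) (j : Fin n) : gs b j ≠ 0 :=
  @InnerProductSpace.gramSchmidt_ne_zero ℝ _ _ _ _ (Fin n) _ _ (wfFin n) b j hli

lemma inner_gs_b_self (j : Fin n) : ⟪gs b j, b j⟫ = ‖gs b j‖ ^ 2 := by
  have hgs : @InnerProductSpace.gramSchmidt ℝ _ _ _ _ (Fin n) _ _ (wfFin n) b = gs b := rfl
  conv_lhs => rw [@InnerProductSpace.gramSchmidt_def' ℝ _ _ _ _ (Fin n) _ _ (wfFin n) b j]
  rw [hgs, inner_add_right, real_inner_self_eq_norm_sq, add_eq_left]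
  simp_rw [Submodule.starProjection_singleton]
  rw [inner_sum]
  apply Finset.sum_eq_zero
  intro l hl
  rw [inner_smul_right, gs_orthogonal b (Finset.mem_Iio.1 hl).ne', mul_zero]

lemma inner_gs_sum (j : Fin n) (r : Fin n → ℝ) :
    ⟪gs b j, ∑ k, r k • gs b k⟫ = r j * ‖gs b j‖ ^ 2 := by
  rw [inner_sum]
  rw [Finset.sum_eq_single j]
  · rw [real_inner_smul_right, real_inner_self_eq_norm_sq]
  · intro k _ hk
    rw [real_inner_smul_right, gs_orthogonal b (Ne.symm hk)]
    simp
  · simp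

lemma norm_sq_sum_gs (r : Fin n → ℝ) :
    ‖∑ j, r j • gs b j‖ ^ 2 = ∑ j, r j ^ 2 * ‖gs b j‖ ^ 2 := by
  rw [← real_inner_self_eq_norm_sq, sum_inner]
  apply Finset.sum_congr rfl
  intro j _
  rw [real_inner_smul_left, inner_gs_sum]
  ring

lemma coefv_expand (hli : LinearIndependent ℝ b) (w : EuclideanSpace ℝ (Fin n)) :
    ∑ j, coefv b w j • gs b j = w := by
  rcases Nat.eq_zero_or_pos n with h0 | hpos
  · subst h0
    simp only [Finset.univ_eq_empty, Finset.sum_empty]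
    exact (Subsingleton.elim _ _)
  have : Nonempty (Fin n) := ⟨⟨0, hpos⟩⟩
  have hcard : Fintype.card (Fin n) = Module.finrank ℝ (EuclideanSpace ℝ (Fin n)) := by
    rw [Fintype.card_fin, finrank_euclideanSpace_fin]
  let B : Module.Basis (Fin n) ℝ (EuclideanSpace ℝ (Fin n)) :=
    basisOfLinearIndependentOfCardEqFinrank hli hcard
  have hB : ⇑B = b := coe_basisOfLinearIndependentOfCardEqFinrank hli hcard
  let G := @InnerProductSpace.gramSchmidtBasis ℝ _ _ _ _ (Fin n) _ _ (wfFin n) B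
  have hG : ⇑G = gs b := by
    have := @InnerProductSpace.coe_gramSchmidtBasis ℝ _ _ _ _ (Fin n) _ _ (wfFin n) B
    rw [this, hB]; rfl
  have hw : w = ∑ j, G.repr w j • gs b j := by
    conv_lhs => rw [← Module.Basis.sum_repr G w]
    simp_rw [hG]
  have hc : ∀ j, coefv b w j = G.repr w j := by
    intro j
    rw [coefv]
    conv_lhs => rw [hw]
    rw [inner_gs_sum]
    have h0 : ‖gs b j‖ ^ 2 ≠ 0 := pow_ne_zero _ (norm_ne_zero_iff.2 (gs_ne_zero b hli j))
    have h0' : ‖gs b j‖ ≠ 0 := norm_ne_zero_iff.2 (gs_ne_zero b hli j)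
    field_simp
  conv_rhs => rw [hw]
  exact Finset.sum_congr rfl fun j _ => by rw [hc]

lemma norm_sq_coefv (hli : LinearIndependent ℝ b) (w : EuclideanSpace ℝ (Fin n)) :
    ‖w‖ ^ 2 = ∑ j, coefv b w j ^ 2 * ‖gs b j‖ ^ 2 := by
  conv_lhs => rw [← coefv_expand b hli w]
  exact norm_sq_sum_gs b _

lemma coefv_zero (j : Fin n) : coefv b 0 j = 0 := by
  rw [coefv, inner_zero_right, zero_div]

lemma coefv_add (u v : EuclideanSpace ℝ (Fin n)) (j : Fin n) :
    coefv b (u + v) j = coefv b u j + coefv b v j := by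
  rw [coefv, coefv, coefv, inner_add_right, add_div]

lemma coefv_sub (u v : EuclideanSpace ℝ (Fin n)) (j : Fin n) :
    coefv b (u - v) j = coefv b u j - coefv b v j := by
  rw [coefv, coefv, coefv, inner_sub_right, sub_div]

lemma coefv_zsmul (t : ℤ) (v : EuclideanSpace ℝ (Fin n)) (j : Fin n) :
    coefv b (t • v) j = t * coefv b v j := by
  have : (t : ℤ) • v = (t : ℝ) • v := by
    rw [← Int.cast_smul_eq_zsmul ℝ t v]
  rw [coefv, coefv, this, inner_smul_right, mul_div_assoc]

lemma coefv_sum {α : Type*} (s : Finset α) (f : α → EuclideanSpace ℝ (Fin n)) (j : Fin n) :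
    coefv b (∑ k ∈ s, f k) j = ∑ k ∈ s, coefv b (f k) j := by
  classical
  induction s using Finset.induction_on with
  | empty => simp [coefv_zero]
  | insert _ _ h ih => rw [Finset.sum_insert h, Finset.sum_insert h, coefv_add, ih]

lemma coefv_b_self (hli : LinearIndependent ℝ b) (j : Fin n) : coefv b (b j) j = 1 := by
  rw [coefv, inner_gs_b_self]
  exact div_self (pow_ne_zero _ (norm_ne_zero_iff.2 (gs_ne_zero b hli j)))

lemma coefv_b_lt {j k : Fin n} (h : j < k) : coefv b (b j) k = 0 := by
  rw [coefv, inner_gs_b_lt b h, zero_div]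

/-- The coset vector `b i + ∑_{j<i} c j • b j`. -/
noncomputable def Fvec (c : Fin n → ℤ) (i : Fin n) : EuclideanSpace ℝ (Fin n) :=
  b i + ∑ j ∈ Finset.univ.filter (· < i), c j • b j

lemma coefv_Fvec_gt (c : Fin n → ℤ) {i k : Fin n} (h : i < k) :
    coefv b (Fvec b c i) k = 0 := by
  rw [Fvec, coefv_add, coefv_b_lt b h, coefv_sum, zero_add]
  apply Finset.sum_eq_zero
  intro j hj
  rw [coefv_zsmul, coefv_b_lt b ((Finset.mem_filter.1 hj).2.trans h), mul_zero]

lemma coefv_Fvec_self (hli : LinearIndependent ℝ b) (c : Fin n → ℤ) (i : Fin n) :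
    coefv b (Fvec b c i) i = 1 := by
  rw [Fvec, coefv_add, coefv_b_self b hli, coefv_sum]
  rw [Finset.sum_eq_zero, add_zero]
  intro j hj
  rw [coefv_zsmul, coefv_b_lt b (Finset.mem_filter.1 hj).2, mul_zero]

lemma Fvec_update (c : Fin n → ℤ) {j0 i : Fin n} (hj0 : j0 < i) (t : ℤ) :
    Fvec b (Function.update c j0 (c j0 - t)) i = Fvec b c i - t • b j0 := by
  classical
  have hmem : j0 ∈ Finset.univ.filter (· < i) := by simp [hj0]
  have hpt : ∀ j ∈ Finset.univ.filter (· < i),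
      (Function.update c j0 (c j0 - t)) j • b j
        = Function.update (fun k => c k • b k) j0 ((c j0 - t) • b j0) j := by
    intro j _
    by_cases h : j = j0
    · subst h; simp
    · simp [Function.update_of_ne h]
  rw [Fvec, Fvec, Finset.sum_congr rfl hpt, Finset.sum_update_of_mem hmem,
    ← Finset.add_sum_erase _ (fun k => c k • b k) hmem, sub_smul, Finset.erase_eq]
  abel

lemma size_reduce (hli : LinearIndependent ℝ b) (i : Fin n) :
    ∃ c : Fin n → ℤ, ∀ j, j < i → |coefv b (Fvec b c i) j| ≤ 1 / 2 := by
  classical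
  suffices H : ∀ m : ℕ, ∃ c : Fin n → ℤ, ∀ j : Fin n, j < i → (i : ℕ) - (j : ℕ) ≤ m →
      |coefv b (Fvec b c i) j| ≤ 1 / 2 by
    obtain ⟨c, hc⟩ := H n
    exact ⟨c, fun j hj => hc j hj (le_trans (Nat.sub_le _ _) i.isLt.le)⟩
  intro m
  induction m with
  | zero =>
    refine ⟨0, fun j hj h0 => absurd h0 ?_⟩
    have : (j : ℕ) < (i : ℕ) := hj
    omega
  | succ m ih =>
    obtain ⟨c, hc⟩ := ih
    by_cases hm : m + 1 ≤ (i : ℕ)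
    · have hj0n : (i : ℕ) - (m + 1) < n := lt_of_le_of_lt (Nat.sub_le _ _) i.isLt
      set j0 : Fin n := ⟨(i : ℕ) - (m + 1), hj0n⟩ with hj0def
      have hj0i : j0 < i := by
        show (i : ℕ) - (m + 1) < (i : ℕ)
        omega
      set t := round (coefv b (Fvec b c i) j0) with ht
      refine ⟨Function.update c j0 (c j0 - t), ?_⟩
      intro j hj hle
      rw [Fvec_update b c hj0i t, coefv_sub, coefv_zsmul]
      rcases eq_or_ne j j0 with rfl | hne
      · rw [coefv_b_self b hli, mul_one, ht]
        exact abs_sub_round _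
      · have hvne : (j : ℕ) ≠ (j0 : ℕ) := fun h => hne (Fin.ext h)
        have hj0j : j0 < j := by
          have h1 : (i : ℕ) - (j : ℕ) ≤ m + 1 := hle
          have h2 : (j : ℕ) < (i : ℕ) := hj
          show (j0 : ℕ) < (j : ℕ)
          have : (j0 : ℕ) = (i : ℕ) - (m + 1) := rfl
          omega
        rw [coefv_b_lt b hj0j, mul_zero, sub_zero]
        apply hc j hj
        have : (j0 : ℕ) = (i : ℕ) - (m + 1) := rfl
        have : (j0 : ℕ) < (j : ℕ) := hj0j
        omega
    · refine ⟨c, fun j hj hle => hc j hj ?_⟩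
      omega

section SuccMin
variable {L : AddSubgroup (EuclideanSpace ℝ (Fin n))}

/-- The defining set of `succMin`. -/
def smSet (L : AddSubgroup (EuclideanSpace ℝ (Fin n))) (m : ℕ) : Set ℝ :=
  {r : ℝ | 0 ≤ r ∧ ∃ v : Fin m → EuclideanSpace ℝ (Fin n),
    (∀ j, v j ∈ L) ∧ LinearIndependent ℝ v ∧ ∀ j, ‖v j‖ ≤ r}

lemma succMin_eq (m : ℕ) : succMin L m = sInf (smSet L m) := rfl

lemma smSet_bddBelow (m : ℕ) : BddBelow (smSet L m) := ⟨0, fun _ hx => hx.1⟩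

lemma smSet_nonempty {m : ℕ} (v : Fin m → EuclideanSpace ℝ (Fin n))
    (hv : ∀ j, v j ∈ L) (hvli : LinearIndependent ℝ v) : (smSet L m).Nonempty := by
  refine ⟨∑ k, ‖v k‖, Finset.sum_nonneg fun k _ => norm_nonneg _, v, hv, hvli, fun j => ?_⟩
  exact Finset.single_le_sum (fun k _ => norm_nonneg (v k)) (Finset.mem_univ j)

lemma succMin_nonneg (m : ℕ) : 0 ≤ succMin L m :=
  Real.sInf_nonneg fun _ hx => hx.1

lemma succMin_le {m : ℕ} {r : ℝ} (hr : 0 ≤ r) (v : Fin m → EuclideanSpace ℝ (Fin n))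
    (hv : ∀ j, v j ∈ L) (hvli : LinearIndependent ℝ v) (hnorm : ∀ j, ‖v j‖ ≤ r) :
    succMin L m ≤ r :=
  csInf_le (smSet_bddBelow m) ⟨hr, v, hv, hvli, hnorm⟩

lemma smSet_anti {k m : ℕ} (h : k ≤ m) : smSet L m ⊆ smSet L k := by
  rintro r ⟨hr, v, hv, hvli, hnorm⟩
  exact ⟨hr, v ∘ Fin.castLE h, fun j => hv _,
    hvli.comp (Fin.castLE h) (Fin.castLE_injective h), fun j => hnorm _⟩

lemma succMin_mono {k m : ℕ} (h : k ≤ m) (hne : (smSet L m).Nonempty) :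
    succMin L k ≤ succMin L m :=
  csInf_le_csInf (smSet_bddBelow k) hne (smSet_anti h)

lemma succMin_zero : succMin L 0 = 0 := by
  have : smSet L 0 = Set.Ici 0 := by
    ext r
    constructor
    · exact fun hx => hx.1
    · exact fun hr => ⟨hr, Fin.elim0, fun j => j.elim0, linearIndependent_empty_type,
        fun j => j.elim0⟩
  rw [succMin_eq, this, csInf_Ici]

/-- Any lattice vector outside the span of the first `j` minima realizers has norm
at least the `(j+1)`-st successive minimum. -/
lemma succMin_le_norm_of_not_mem_span {N : ℕ} (v : Fin N → EuclideanSpace ℝ (Fin n))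
    (hv : ∀ j, v j ∈ L) (hvli : LinearIndependent ℝ v)
    (hnorm : ∀ k : Fin N, ‖v k‖ = succMin L ((k : ℕ) + 1)) {j : ℕ} (hj : j < N)
    (w : EuclideanSpace ℝ (Fin n)) (hw : w ∈ L)
    (hspan : w ∉ Submodule.span ℝ (v '' {k : Fin N | (k : ℕ) < j})) :
    succMin L (j + 1) ≤ ‖w‖ := by
  by_contra hcon
  push_neg at hcon
  have hPj : j ≤ j ∧ succMin L (j + 1) = succMin L (j + 1) := ⟨le_rfl, rfl⟩
  have hex : ∃ k, k ≤ j ∧ succMin L (k + 1) = succMin L (j + 1) := ⟨j, hPj⟩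
  classical
  let k := Nat.find hex
  obtain ⟨hkj, hkval⟩ : k ≤ j ∧ succMin L (k + 1) = succMin L (j + 1) := Nat.find_spec hex
  have hkN : k < N := lt_of_le_of_lt hkj hj
  -- the restricted family
  let u : Fin k → EuclideanSpace ℝ (Fin n) := v ∘ Fin.castLE hkN.le
  have huv : ∀ l : Fin k, u l ∈ L := fun l => hv _
  have huli : LinearIndependent ℝ u := hvli.comp _ (Fin.castLE_injective hkN.le)
  have hnonemptyk : (smSet L k).Nonempty := smSet_nonempty u huv huli
  -- succMin L k < succMin L (j+1)
  have hlow : succMin L k < succMin L (j + 1) := by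
    rcases Nat.eq_zero_or_pos k with hk0 | hkpos
    · rw [hk0, succMin_zero]
      exact lt_of_le_of_lt (norm_nonneg w) hcon
    · obtain ⟨k', hk'⟩ := Nat.exists_eq_succ_of_ne_zero hkpos.ne'
      have hknot : ¬(k' ≤ j ∧ succMin L (k' + 1) = succMin L (j + 1)) :=
        Nat.find_min hex (show k' < k by omega)
      have hk'j : k' ≤ j := by omega
      have hne2 : succMin L (k' + 1) ≠ succMin L (j + 1) := fun h => hknot ⟨hk'j, h⟩
      have hle2 : succMin L (k' + 1) ≤ succMin L (j + 1) := by
        apply succMin_mono (by omega)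
        exact smSet_nonempty (v ∘ Fin.castLE (by omega : j + 1 ≤ N)) (fun l => hv _)
          (hvli.comp _ (Fin.castLE_injective _))
      rw [hk']
      exact lt_of_le_of_ne hle2 hne2
  -- build the snoc family
  set r : ℝ := max (succMin L k) ‖w‖ with hr
  have hunorm : ∀ l : Fin k, ‖u l‖ ≤ succMin L k := by
    intro l
    rw [show u l = v (Fin.castLE hkN.le l) from rfl, hnorm]
    exact succMin_mono (by omega : (l : ℕ) + 1 ≤ k) hnonemptyk
  have hsnocli : LinearIndependent ℝ (Fin.snoc u w : Fin (k + 1) → _) := by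
    rw [linearIndependent_fin_snoc]
    refine ⟨huli, fun hmem => hspan (Submodule.span_mono ?_ hmem)⟩
    rintro y ⟨l, rfl⟩
    exact ⟨Fin.castLE hkN.le l, by simpa using lt_of_lt_of_le l.isLt hkj, rfl⟩
  have hsnocmem : ∀ l : Fin (k + 1), (Fin.snoc u w : Fin (k + 1) → _) l ∈ L := by
    intro l
    refine Fin.lastCases ?_ ?_ l
    · rw [Fin.snoc_last]; exact hw
    · intro p; rw [Fin.snoc_castSucc]; exact huv p
  have hsnocnorm : ∀ l : Fin (k + 1), ‖(Fin.snoc u w : Fin (k + 1) → _) l‖ ≤ r := by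
    intro l
    refine Fin.lastCases ?_ ?_ l
    · rw [Fin.snoc_last]; exact le_max_right _ _
    · intro p; rw [Fin.snoc_castSucc]
      exact le_trans (hunorm p) (le_max_left _ _)
  have hfinal : succMin L (k + 1) ≤ r :=
    succMin_le (le_trans (norm_nonneg w) (le_max_right _ _)) _ hsnocmem hsnocli hsnocnorm
  rw [hkval] at hfinal
  have : r < succMin L (j + 1) := max_lt hlow hcon
  linarith

end SuccMin

lemma gs_sq_le_of_ne (hli : LinearIndependent ℝ b) (hsr : StronglyReduced b) {j : Fin n}
    (hne : ‖b j‖ ≠ succMin (latticeOf b) ((j : ℕ) + 1)) :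
    ‖gs b j‖ ^ 2 ≤ (1 / 4) * succMin (latticeOf b) ((j : ℕ) + 1) ^ 2 := by
  classical
  obtain ⟨⟨v, x, hvli, hvmem, hvmin, hvrep, hxdiag, hxtri⟩, hmin⟩ := hsr
  set lam := succMin (latticeOf b) ((j : ℕ) + 1) with hlam
  -- coefficient of v j along gs b j is x j j
  have hco : coefv b (v j) j = (x j j : ℝ) := by
    rw [hvrep j, coefv_sum, Finset.sum_eq_single j]
    · rw [coefv_zsmul, coefv_b_self b hli, mul_one]
    · intro k _ hk
      rcases lt_or_gt_of_ne hk with hlt | hgt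
      · rw [coefv_zsmul, coefv_b_lt b hlt, mul_zero]
      · rw [hxtri j k hgt, zero_smul, coefv_zero]
    · simp
  have hgs0 : (0 : ℝ) < ‖gs b j‖ := norm_pos_iff.2 (gs_ne_zero b hli j)
  -- Cauchy–Schwarz: |x j j| * ‖gs b j‖ ≤ lam
  have hinner : ⟪gs b j, v j⟫ = (x j j : ℝ) * ‖gs b j‖ ^ 2 := by
    have h2 : ‖gs b j‖ ^ 2 ≠ 0 := by positivity
    rw [coefv, div_eq_iff h2] at hco
    exact hco
  have hCS : |(x j j : ℝ)| * ‖gs b j‖ ≤ lam := by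
    have h1 : |⟪gs b j, v j⟫| ≤ ‖gs b j‖ * ‖v j‖ := abs_real_inner_le_norm _ _
    rw [hinner, abs_mul, abs_of_nonneg (by positivity : (0:ℝ) ≤ ‖gs b j‖ ^ 2)] at h1
    rw [hvmin j] at h1
    rw [← hlam] at h1
    have h1' : (|(x j j : ℝ)| * ‖gs b j‖) * ‖gs b j‖ ≤ lam * ‖gs b j‖ := by nlinarith [h1]
    exact le_of_mul_le_mul_right h1' hgs0
  have hlam0 : 0 ≤ lam := le_trans (by positivity) hCS
  by_cases h2 : 2 ≤ |x j j|
  · have h2' : (2 : ℝ) ≤ |(x j j : ℝ)| := by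
      rw [← Int.cast_abs]
      exact_mod_cast h2
    have h3 : 2 * ‖gs b j‖ ≤ lam := by nlinarith [hgs0.le]
    have h4 := mul_le_mul h3 h3 (by positivity) (by linarith)
    nlinarith [h4]
  · -- |x j j| = 1
    have hx1 : x j j = 1 ∨ x j j = -1 := by
      have h := hxdiag j
      rw [Int.abs_eq_natAbs] at h2
      omega
    have hxsq : x j j * x j j = 1 := by rcases hx1 with h | h <;> rw [h] <;> ring
    -- (a) ‖b j‖ ≤ lam
    have ha : ‖b j‖ ≤ lam := by
      have hrep : b j + ∑ k ∈ Finset.univ.filter (· < j), (x j j * x j k) • b k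
          = x j j • v j := by
        rw [hvrep j, Finset.smul_sum]
        simp_rw [smul_smul]
        rw [← Finset.sum_filter_add_sum_filter_not Finset.univ (· < j)
          (fun k => (x j j * x j k) • b k)]
        rw [add_comm]
        congr 1
        rw [Finset.sum_eq_single j]
        · rw [hxsq, one_smul]
        · intro k hk hkj
          have : j < k := lt_of_le_of_ne (not_lt.1 (Finset.mem_filter.1 hk).2) (Ne.symm hkj)
          rw [hxtri j k this, mul_zero, zero_smul]
        · intro h; exact absurd (Finset.mem_filter.2 ⟨Finset.mem_univ j, lt_irrefl j⟩) h
      have hnv : ‖(x j j : ℤ) • v j‖ = lam := by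
        rcases hx1 with h | h <;> rw [h] <;> simp [hvmin j, hlam]
      calc ‖b j‖ ≤ ‖b j + ∑ k ∈ Finset.univ.filter (· < j), (x j j * x j k) • b k‖ :=
            hmin j _
        _ = ‖(x j j : ℤ) • v j‖ := by rw [hrep]
        _ = lam := hnv
    -- (b) lam ≤ ‖b j‖
    have hb : lam ≤ ‖b j‖ := by
      apply succMin_le_norm_of_not_mem_span v hvmem hvli hvmin j.isLt
      · exact AddSubgroup.subset_closure ⟨j, rfl⟩
      · intro hmem
        have hsub : Submodule.span ℝ (v '' {k : Fin n | (k : ℕ) < (j : ℕ)})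
            ≤ Submodule.span ℝ (b '' {k : Fin n | k < j}) := by
          rw [Submodule.span_le]
          rintro y ⟨k, hk, rfl⟩
          have hkj : k < j := hk
          rw [hvrep k]
          apply Submodule.sum_mem
          intro l _
          by_cases hxl : x k l = 0
          · rw [hxl, zero_smul]; exact Submodule.zero_mem _
          · have hlk : l ≤ k := not_lt.1 fun h => hxl (hxtri k l h)
            rw [← Int.cast_smul_eq_zsmul ℝ]
            exact Submodule.smul_mem _ _ (Submodule.subset_span
              ⟨l, lt_of_le_of_lt hlk hkj, rfl⟩)
        have := hsub hmem
        exact hli.notMem_span_image (fun h : j ∈ {k : Fin n | k < j} => lt_irrefl j h) this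
    exact absurd (le_antisymm ha hb) hne

end Aux

theorem stronglyReduced_split_bound {n : ℕ} (b : Fin n → EuclideanSpace ℝ (Fin n))
    (hli : LinearIndependent ℝ b) (hsr : StronglyReduced b) (i : Fin n) :
    ‖b i‖ ^ 2 ≤ ‖gs b i‖ ^ 2 +
      (1 / 4) * ∑ j ∈ Finset.univ.filter (fun j : Fin n =>
          j < i ∧ ‖b j‖ = succMin (latticeOf b) ((j : ℕ) + 1)), ‖gs b j‖ ^ 2 +
      (1 / 16) * ∑ j ∈ Finset.univ.filter (fun j : Fin n =>
          j < i ∧ ‖b j‖ ≠ succMin (latticeOf b) ((j : ℕ) + 1)),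
        succMin (latticeOf b) ((j : ℕ) + 1) ^ 2 := by
  classical
  obtain ⟨c, hc⟩ := size_reduce b hli i
  have hmin := hsr.2
  set w := Fvec b c i with hwdef
  have h1 : ‖b i‖ ^ 2 ≤ ‖w‖ ^ 2 := by
    have hle : ‖b i‖ ≤ ‖w‖ := hmin i c
    nlinarith [norm_nonneg (b i), norm_nonneg w]
  have h2 : ‖w‖ ^ 2 = ∑ j, coefv b w j ^ 2 * ‖gs b j‖ ^ 2 := norm_sq_coefv b hli w
  have h3 : ∑ j, coefv b w j ^ 2 * ‖gs b j‖ ^ 2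
      = (∑ j ∈ Finset.univ.filter (· < i), coefv b w j ^ 2 * ‖gs b j‖ ^ 2)
        + ‖gs b i‖ ^ 2 := by
    rw [← Finset.sum_filter_add_sum_filter_not Finset.univ (· < i)
      (fun j => coefv b w j ^ 2 * ‖gs b j‖ ^ 2)]
    congr 1
    rw [Finset.sum_eq_single i]
    · rw [hwdef, coefv_Fvec_self b hli c i, one_pow, one_mul]
    · intro k hk hki
      have : i < k := lt_of_le_of_ne (not_lt.1 (Finset.mem_filter.1 hk).2) (Ne.symm hki)
      rw [hwdef, coefv_Fvec_gt b c this]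
      simp
    · intro h
      exact absurd (Finset.mem_filter.2 ⟨Finset.mem_univ i, not_lt.2 le_rfl⟩) h
  have h4 : ∑ j ∈ Finset.univ.filter (· < i), coefv b w j ^ 2 * ‖gs b j‖ ^ 2
      ≤ ∑ j ∈ Finset.univ.filter (· < i), (1 / 4 : ℝ) * ‖gs b j‖ ^ 2 := by
    apply Finset.sum_le_sum
    intro j hj
    have hj' : j < i := by simpa using (Finset.mem_filter.1 hj).2
    have habs := abs_le.1 (hc j hj')
    have hsq : coefv b w j ^ 2 ≤ 1 / 4 := by nlinarith [habs.1, habs.2]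
    nlinarith [sq_nonneg ‖gs b j‖]
  set P : Fin n → Prop := fun j => ‖b j‖ = succMin (latticeOf b) ((j : ℕ) + 1) with hPdef
  have h5 : ∑ j ∈ Finset.univ.filter (· < i), (1 / 4 : ℝ) * ‖gs b j‖ ^ 2
      = (∑ j ∈ (Finset.univ.filter (· < i)).filter P, (1 / 4 : ℝ) * ‖gs b j‖ ^ 2)
        + ∑ j ∈ (Finset.univ.filter (· < i)).filter (fun j => ¬ P j),
            (1 / 4 : ℝ) * ‖gs b j‖ ^ 2 :=
    (Finset.sum_filter_add_sum_filter_not _ P _).symm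
  have hS : (Finset.univ.filter (· < i)).filter P
      = Finset.univ.filter (fun j : Fin n =>
          j < i ∧ ‖b j‖ = succMin (latticeOf b) ((j : ℕ) + 1)) := by
    ext j
    simp [hPdef]
  have hT : (Finset.univ.filter (· < i)).filter (fun j => ¬ P j)
      = Finset.univ.filter (fun j : Fin n =>
          j < i ∧ ‖b j‖ ≠ succMin (latticeOf b) ((j : ℕ) + 1)) := by
    ext j
    simp [hPdef]
  have h6 : ∑ j ∈ Finset.univ.filter (fun j : Fin n =>
        j < i ∧ ‖b j‖ ≠ succMin (latticeOf b) ((j : ℕ) + 1)), (1 / 4 : ℝ) * ‖gs b j‖ ^ 2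
      ≤ ∑ j ∈ Finset.univ.filter (fun j : Fin n =>
          j < i ∧ ‖b j‖ ≠ succMin (latticeOf b) ((j : ℕ) + 1)),
          (1 / 16 : ℝ) * succMin (latticeOf b) ((j : ℕ) + 1) ^ 2 := by
    apply Finset.sum_le_sum
    intro j hj
    have hne : ‖b j‖ ≠ succMin (latticeOf b) ((j : ℕ) + 1) :=
      ((Finset.mem_filter.1 hj).2).2
    have := gs_sq_le_of_ne b hli hsr hne
    linarith
  rw [hS, hT] at h5
  rw [Finset.mul_sum, Finset.mul_sum]
  linarith [h1, h2.le, h3.le, h4, h5.le, h6]
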